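/- Equation (5) (the ξ_i-derivative of a scaled power-series function belongs to the native space). Let c ∈ H, ξ ∈ [0,1]^d, and i ∈ Fin d with ξ i < 1. Then D_i(ξ)c ∈ H, i.e. ∑_{α : w α > 0} (α!)²·((D_i(ξ)c) α)²/(w α) < ∞, and for every x ∈ (−1,1)^d the function t ↦ ∑_α (c α)·t^{α i}·( ∏_{j≠i} (ξ j)^{α j} )·x^α, defined for t ∈ [0,1), is differentiable at t = ξ i with derivative ∑_α (D_i(ξ)c) α · x^α. -/

import Mathlib

open MeasureTheory Filter Topology

noncomputable section

/-- Factorial `α!` of a multi-index `α : Fin d → ℕ`. -/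
def mfact {d : ℕ} (α : Fin d → ℕ) : ℝ := ∏ i, (Nat.factorial (α i) : ℝ)

/-- Membership in the native space `H` of the power series kernel with weights `w`:
the coefficients vanish where the weights do, and the weighted square sum is finite. -/
def memH {d : ℕ} (w : (Fin d → ℕ) → ℝ) (c : (Fin d → ℕ) → ℝ) : Prop :=
  (∀ α, w α = 0 → c α = 0) ∧
    Summable (fun α : Fin d → ℕ => mfact α ^ 2 * c α ^ 2 / w α)

/-- Inner product `⟨c, c'⟩` on the native space (terms with `w α = 0` vanish since
division by zero is zero). -/
def innerH {d : ℕ} (w : (Fin d → ℕ) → ℝ) (c c' : (Fin d → ℕ) → ℝ) : ℝ :=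
  ∑' α : Fin d → ℕ, mfact α ^ 2 * c α * c' α / w α

/-- Norm on the native space. -/
def normH {d : ℕ} (w : (Fin d → ℕ) → ℝ) (c : (Fin d → ℕ) → ℝ) : ℝ :=
  Real.sqrt (innerH w c c)

/-- The scaling operator `S_ξ`, `(S_ξ c) α = ξ^α · c α`. -/
def Sscale {d : ℕ} (ξ : Fin d → ℝ) (c : (Fin d → ℕ) → ℝ) : (Fin d → ℕ) → ℝ :=
  fun α => (∏ i, ξ i ^ α i) * c α

/-- The scaling-derivative sequence `D_i(ξ) c`,
`(D_i(ξ)c) α = (α i)·(ξ i)^(α i − 1)·(∏_{j≠i} (ξ j)^(α j))·(c α)`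
(the factor is `0` when `α i = 0`, as enforced by the factor `(α i : ℝ)`). -/
def Dscale {d : ℕ} (i : Fin d) (ξ : Fin d → ℝ) (c : (Fin d → ℕ) → ℝ) : (Fin d → ℕ) → ℝ :=
  fun α => (α i : ℝ) * ξ i ^ (α i - 1) * (∏ j ∈ Finset.univ.erase i, ξ j ^ α j) * c α

/-- A bounded linear operator on the native space: maps `H` to `H`, is linear on `H`,
and is bounded on `H`. -/
def IsBoundedOpH {d : ℕ} (w : (Fin d → ℕ) → ℝ)
    (A : ((Fin d → ℕ) → ℝ) → ((Fin d → ℕ) → ℝ)) : Prop :=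
  (∀ c, memH w c → memH w (A c)) ∧
  (∀ (a : ℝ) (c c' : (Fin d → ℕ) → ℝ), memH w c → memH w c' →
      A (a • c + c') = a • A c + A c') ∧
  (∃ M : ℝ, 0 ≤ M ∧ ∀ c, memH w c → normH w (A c) ≤ M * normH w c)

/-- Operator norm on the native space: the least bound constant. -/
def opNormH {d : ℕ} (w : (Fin d → ℕ) → ℝ)
    (A : ((Fin d → ℕ) → ℝ) → ((Fin d → ℕ) → ℝ)) : ℝ :=
  sInf {M : ℝ | 0 ≤ M ∧ ∀ c, memH w c → normH w (A c) ≤ M * normH w c}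

/-- The quadratic loss `Q_{A,g}(ξ; c) = ½⟨S_ξ c, A (S_ξ c)⟩ − ⟨g, S_ξ c⟩`. -/
def quadLoss {d : ℕ} (w : (Fin d → ℕ) → ℝ)
    (A : ((Fin d → ℕ) → ℝ) → ((Fin d → ℕ) → ℝ)) (g : (Fin d → ℕ) → ℝ)
    (ξ : Fin d → ℝ) (c : (Fin d → ℕ) → ℝ) : ℝ :=
  (1/2) * innerH w (Sscale ξ c) (A (Sscale ξ c)) - innerH w g (Sscale ξ c)

/-- The ξ_i-derivative of the quadratic loss:
`½⟨D_i(ξ)c, A(S_ξ c)⟩ + ½⟨S_ξ c, A(D_i(ξ)c)⟩ − ⟨g, D_i(ξ)c⟩`. -/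
def quadLossDeriv {d : ℕ} (w : (Fin d → ℕ) → ℝ)
    (A : ((Fin d → ℕ) → ℝ) → ((Fin d → ℕ) → ℝ)) (g : (Fin d → ℕ) → ℝ)
    (i : Fin d) (ξ : Fin d → ℝ) (c : (Fin d → ℕ) → ℝ) : ℝ :=
  (1/2) * innerH w (Dscale i ξ c) (A (Sscale ξ c))
    + (1/2) * innerH w (Sscale ξ c) (A (Dscale i ξ c))
    - innerH w g (Dscale i ξ c)

/-- The function represented by a coefficient sequence: `f_c(x) = ∑_α (c α)·x^α`. -/
def evalF {d : ℕ} (c : (Fin d → ℕ) → ℝ) (x : Fin d → ℝ) : ℝ :=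
  ∑' α : Fin d → ℕ, c α * ∏ i, x i ^ α i

/-- Sup norm of the represented function on a set `Z`. -/
def supNormOn {d : ℕ} (Z : Set (Fin d → ℝ)) (c : (Fin d → ℕ) → ℝ) : ℝ :=
  ⨆ z : Z, |evalF c (z : Fin d → ℝ)|


lemma mfact_pos {d : ℕ} (α : Fin d → ℕ) : 0 < mfact α :=
  Finset.prod_pos fun i _ => by positivity

/-- For `0 ≤ r < 1`, the quantities `n * r^(n-1)` are uniformly bounded. -/
lemma geom_deriv_bound {r : ℝ} (hr0 : 0 ≤ r) (hr1 : r < 1) :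
    ∃ C : ℝ, 0 ≤ C ∧ ∀ n : ℕ, (n : ℝ) * r ^ (n - 1) ≤ C := by
  have h1 : Summable (fun m : ℕ => (m : ℝ) * r ^ m) := by
    simpa using summable_pow_mul_geometric_of_norm_lt_one 1
      (r := r) (by rwa [Real.norm_eq_abs, abs_of_nonneg hr0])
  have h2 : Summable (fun m : ℕ => r ^ m) := summable_geometric_of_lt_one hr0 hr1
  have hsum : Summable (fun m : ℕ => ((m : ℝ) + 1) * r ^ m) := by
    simpa [add_mul] using h1.add h2
  refine ⟨∑' m : ℕ, ((m : ℝ) + 1) * r ^ m,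
    tsum_nonneg fun m => by positivity, fun n => ?_⟩
  match n with
  | 0 => simpa using tsum_nonneg (fun m : ℕ => by positivity :
      ∀ m : ℕ, 0 ≤ ((m : ℝ) + 1) * r ^ m)
  | (m + 1) =>
    have := Summable.le_tsum hsum m (fun k _ => by positivity)
    push_cast
    simpa [Nat.add_sub_cancel] using this

/-- Members of the native space have absolutely summable coefficients. -/
lemma summable_abs_of_memH {d : ℕ} {w c : (Fin d → ℕ) → ℝ} (hw : ∀ α, 0 ≤ w α)
    (hwsum : Summable fun α : Fin d → ℕ => w α / mfact α ^ 2) (hc : memH w c) :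
    Summable fun α : Fin d → ℕ => |c α| := by
  have hb : Summable (fun α : Fin d → ℕ =>
      (mfact α ^ 2 * c α ^ 2 / w α + w α / mfact α ^ 2) / 2) :=
    (hc.2.add hwsum).div_const 2
  refine Summable.of_nonneg_of_le (fun α => abs_nonneg _) (fun α => ?_) hb
  rcases eq_or_lt_of_le (hw α) with h0 | hpos
  · simp [← h0, hc.1 α h0.symm]
  · have hm : 0 < mfact α := mfact_pos α
    rw [le_div_iff₀ (by norm_num : (0:ℝ) < 2),
      div_add_div _ _ (ne_of_gt hpos) (by positivity), le_div_iff₀ (by positivity)]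
    have hkey : mfact α ^ 2 * c α ^ 2 * mfact α ^ 2 + w α * w α
        - |c α| * 2 * (w α * mfact α ^ 2) = (mfact α ^ 2 * |c α| - w α) ^ 2 := by
      rw [← sq_abs (c α)]; ring
    linarith [sq_nonneg (mfact α ^ 2 * |c α| - w α)]

/-- Equation (5): the ξ_i-derivative of a scaled power-series function belongs to
the native space. For `c ∈ H`, `ξ ∈ [0,1]^d` with `ξ i < 1`: `D_i(ξ)c ∈ H`, and for
every `x ∈ (−1,1)^d` the function `t ↦ ∑_α (c α)·t^{α i}·(∏_{j≠i} (ξ j)^{α j})·x^α`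
on `[0,1)` is differentiable at `t = ξ i` with derivative `∑_α (D_i(ξ)c) α · x^α`. -/
theorem scaled_function_xi_derivative
    (d : ℕ) (hd : 1 ≤ d)
    (w : (Fin d → ℕ) → ℝ) (hw : ∀ α, 0 ≤ w α)
    (hwsum : Summable fun α : Fin d → ℕ => w α / mfact α ^ 2)
    (c : (Fin d → ℕ) → ℝ) (hc : memH w c)
    (ξ : Fin d → ℝ) (hξ : ∀ j, ξ j ∈ Set.Icc (0:ℝ) 1)
    (i : Fin d) (hξi : ξ i < 1) :
    memH w (Dscale i ξ c) ∧
      ∀ x : Fin d → ℝ, (∀ j, x j ∈ Set.Ioo (-1:ℝ) 1) →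
        HasDerivWithinAt
          (fun t : ℝ => ∑' α : Fin d → ℕ,
            c α * t ^ α i * (∏ j ∈ Finset.univ.erase i, ξ j ^ α j) * ∏ j, x j ^ α j)
          (∑' α : Fin d → ℕ, Dscale i ξ c α * ∏ j, x j ^ α j)
          (Set.Ico (0:ℝ) 1) (ξ i) := by
  -- notation
  set P : (Fin d → ℕ) → ℝ := fun α => ∏ j ∈ Finset.univ.erase i, ξ j ^ α j with hP
  have hP01 : ∀ α, 0 ≤ P α ∧ P α ≤ 1 := by
    intro α
    constructor
    · exact Finset.prod_nonneg fun j _ => pow_nonneg (hξ j).1 _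
    · exact Finset.prod_le_one (fun j _ => pow_nonneg (hξ j).1 _)
        (fun j _ => pow_le_one₀ (hξ j).1 (hξ j).2)
  have habs : Summable fun α : Fin d → ℕ => |c α| :=
    summable_abs_of_memH hw hwsum hc
  have hξi0 : 0 ≤ ξ i := (hξ i).1
  constructor
  · -- memH part
    obtain ⟨C, hC0, hC⟩ := geom_deriv_bound hξi0 hξi
    refine ⟨fun α h0 => by simp [Dscale, hc.1 α h0], ?_⟩
    refine Summable.of_nonneg_of_le (fun α => ?_) (fun α => ?_) (hc.2.mul_left (C ^ 2))
    · exact div_nonneg (by positivity) (hw α)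
    · have hfac0 : 0 ≤ (α i : ℝ) * ξ i ^ (α i - 1) * P α :=
        mul_nonneg (by positivity) (hP01 α).1
      have hfac : (α i : ℝ) * ξ i ^ (α i - 1) * P α ≤ C := by
        calc (α i : ℝ) * ξ i ^ (α i - 1) * P α
            ≤ (α i : ℝ) * ξ i ^ (α i - 1) * 1 :=
              mul_le_mul_of_nonneg_left (hP01 α).2 (by positivity)
          _ ≤ C := by rw [mul_one]; exact hC (α i)
      have heq : mfact α ^ 2 * Dscale i ξ c α ^ 2 / w α
          = ((α i : ℝ) * ξ i ^ (α i - 1) * P α) ^ 2 * (mfact α ^ 2 * c α ^ 2 / w α) := by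
        simp only [Dscale, hP]
        ring
      rw [heq]
      have hsq : ((α i : ℝ) * ξ i ^ (α i - 1) * P α) ^ 2 ≤ C ^ 2 := by
        apply sq_le_sq' <;> nlinarith
      have hterm : 0 ≤ mfact α ^ 2 * c α ^ 2 / w α := div_nonneg (by positivity) (hw α)
      exact mul_le_mul_of_nonneg_right hsq hterm
  · -- derivative part
    intro x hx
    set r : ℝ := (ξ i + 1) / 2 with hr
    have hr0 : 0 ≤ r := by positivity
    have hr1 : r < 1 := by rw [hr]; linarith
    have hmem : ξ i ∈ Set.Ioo (-r) r := by
      constructor <;> [linarith; (rw [hr]; linarith)]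
    obtain ⟨C, hC0, hC⟩ := geom_deriv_bound hr0 hr1
    set X : (Fin d → ℕ) → ℝ := fun α => ∏ j, x j ^ α j with hX
    have hX1 : ∀ α, |X α| ≤ 1 := by
      intro α
      rw [hX]
      simp only [Finset.abs_prod, abs_pow]
      exact Finset.prod_le_one (fun j _ => by positivity)
        (fun j _ => pow_le_one₀ (abs_nonneg _) (le_of_lt (abs_lt.mpr ⟨(hx j).1, (hx j).2⟩)))
    have key : HasDerivAt
        (fun t : ℝ => ∑' α : Fin d → ℕ, c α * t ^ α i * P α * X α)
        (∑' α : Fin d → ℕ, c α * ((α i : ℝ) * ξ i ^ (α i - 1)) * P α * X α) (ξ i) := by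
      refine hasDerivAt_tsum_of_isPreconnected
        (u := fun α : Fin d → ℕ => C * |c α|)
        (g := fun (α : Fin d → ℕ) (t : ℝ) => c α * t ^ α i * P α * X α)
        (g' := fun (α : Fin d → ℕ) (t : ℝ) => c α * ((α i : ℝ) * t ^ (α i - 1)) * P α * X α)
        (habs.mul_left C) isOpen_Ioo
        (isPreconnected_Ioo) (fun α t _ => ?_) (fun α t ht => ?_) hmem ?_ hmem
      · exact (((hasDerivAt_pow (α i) t).const_mul (c α)).mul_const (P α)).mul_const (X α)
      · have htr : |t| ≤ r := le_of_lt (abs_lt.mpr ⟨ht.1, ht.2⟩)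
        have h1 : (α i : ℝ) * |t| ^ (α i - 1) ≤ C := by
          calc (α i : ℝ) * |t| ^ (α i - 1) ≤ (α i : ℝ) * r ^ (α i - 1) := by
                gcongr
            _ ≤ C := hC (α i)
        have : ‖c α * ((α i : ℝ) * t ^ (α i - 1)) * P α * X α‖
            = |c α| * ((α i : ℝ) * |t| ^ (α i - 1)) * |P α| * |X α| := by
          simp [abs_mul, abs_pow, Nat.abs_cast, mul_assoc]
        rw [this]
        calc |c α| * ((α i : ℝ) * |t| ^ (α i - 1)) * |P α| * |X α|
            ≤ |c α| * C * 1 * 1 := by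
              gcongr
              · rw [abs_of_nonneg (hP01 α).1]; exact (hP01 α).2
              · exact hX1 α
          _ = C * |c α| := by ring
      · refine Summable.of_norm_bounded habs (fun α => ?_)
        have : ‖c α * ξ i ^ α i * P α * X α‖
            = |c α| * |ξ i| ^ α i * |P α| * |X α| := by
          simp [abs_mul, abs_pow]
        rw [this]
        calc |c α| * |ξ i| ^ α i * |P α| * |X α| ≤ |c α| * 1 * 1 * 1 := by
              gcongr
              · exact pow_le_one₀ (abs_nonneg _) (by rw [abs_of_nonneg hξi0]; linarith)
              · rw [abs_of_nonneg (hP01 α).1]; exact (hP01 α).2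
              · exact hX1 α
          _ = |c α| := by ring
    have hderiv_eq : (∑' α : Fin d → ℕ, c α * ((α i : ℝ) * ξ i ^ (α i - 1)) * P α * X α)
        = ∑' α : Fin d → ℕ, Dscale i ξ c α * X α := by
      refine tsum_congr fun α => ?_
      simp only [Dscale, hP, hX]
      ring
    rw [hderiv_eq] at key
    exact key.hasDerivWithinAt
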